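/- Let A₁ ∈ ℝ^{m×k} with rank(A₁) = k, A₂ ∈ ℝ^{m×(n−k)}, and r ≥ k. Then the optimal value of the constrained low-rank approximation problem min{‖A₂ − B₂‖_F² : B₂ ∈ ℝ^{m×(n−k)}, rank(A₁ B₂) ≤ r} equals ‖P⊥_{A₁}(A₂) − H_{r−k}(P⊥_{A₁}(A₂))‖_F², i.e., the squared Frobenius error of the best rank-(r−k) approximation of P⊥_{A₁}(A₂). -/

import Mathlib

open Matrix

/-- Frobenius norm of a real matrix. -/
noncomputable def frobNorm {m n : ℕ} (A : Matrix (Fin m) (Fin n) ℝ) : ℝ :=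
  Real.sqrt (∑ i, ∑ j, (A i j) ^ 2)

/-- Column space of a matrix, as a subspace of Euclidean space. -/
noncomputable def colSpace {m k : ℕ} (A : Matrix (Fin m) (Fin k) ℝ) :
    Submodule ℝ (EuclideanSpace ℝ (Fin m)) :=
  LinearMap.range (Matrix.toEuclideanLin A)

/-- `P_{A₁}`: orthogonal projection onto the column space of `A₁`, applied columnwise. -/
noncomputable def projCols {m k l : ℕ} (A₁ : Matrix (Fin m) (Fin k) ℝ)
    (B : Matrix (Fin m) (Fin l) ℝ) : Matrix (Fin m) (Fin l) ℝ :=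
  Matrix.of fun i j =>
    (Submodule.orthogonalProjectionOnto (colSpace A₁) (WithLp.toLp 2 fun i' => B i' j) : EuclideanSpace ℝ (Fin m)) i

/-- `P⊥_{A₁}`: orthogonal projection onto the orthogonal complement of the column
space of `A₁`, applied columnwise. -/
noncomputable def projOrthCols {m k l : ℕ} (A₁ : Matrix (Fin m) (Fin k) ℝ)
    (B : Matrix (Fin m) (Fin l) ℝ) : Matrix (Fin m) (Fin l) ℝ :=
  Matrix.of fun i j =>
    (Submodule.orthogonalProjectionOnto (colSpace A₁)ᗮ (WithLp.toLp 2 fun i' => B i' j) : EuclideanSpace ℝ (Fin m)) i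

open Finset
lemma frobNorm_sq {m n : ℕ} (A : Matrix (Fin m) (Fin n) ℝ) :
    frobNorm A ^ 2 = ∑ i, ∑ j, (A i j) ^ 2 :=
  Real.sq_sqrt (by positivity)

lemma sumsq_eq_trace {m l : ℕ} (X : Matrix (Fin m) (Fin l) ℝ) :
    ∑ i, ∑ j, X i j ^ 2 = Matrix.trace (Xᵀ * X) := by
  rw [Finset.sum_comm]
  simp [Matrix.trace, Matrix.mul_apply, Matrix.diag, sq]

lemma sumsq_mul_left {m l : ℕ} {U : Matrix (Fin m) (Fin m) ℝ} (hU : Uᵀ * U = 1)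
    (X : Matrix (Fin m) (Fin l) ℝ) :
    ∑ i, ∑ j, (U * X) i j ^ 2 = ∑ i, ∑ j, X i j ^ 2 := by
  rw [sumsq_eq_trace, sumsq_eq_trace, Matrix.transpose_mul,
    Matrix.mul_assoc, ← Matrix.mul_assoc Uᵀ U X, hU, Matrix.one_mul]

lemma sumsq_mul_right {m l : ℕ} {V : Matrix (Fin l) (Fin l) ℝ} (hV : V * Vᵀ = 1)
    (X : Matrix (Fin m) (Fin l) ℝ) :
    ∑ i, ∑ j, (X * V) i j ^ 2 = ∑ i, ∑ j, X i j ^ 2 := by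
  rw [sumsq_eq_trace, sumsq_eq_trace, Matrix.transpose_mul,
    Matrix.mul_assoc, Matrix.trace_mul_comm, ← Matrix.mul_assoc, Matrix.mul_assoc (Xᵀ * X), hV,
    Matrix.mul_one]

lemma rank_eq_range {m : ℕ} {n : Type*} [Fintype n] [DecidableEq n]
    (A : Matrix (Fin m) n ℝ) :
    A.rank = Module.finrank ℝ (LinearMap.range (Matrix.toEuclideanLin A)) :=
  Matrix.rank_eq_finrank_range_toLin A (PiLp.basisFun 2 ℝ (Fin m)) (PiLp.basisFun 2 ℝ n)

lemma rank_eq_colSpace {m k : ℕ} (A : Matrix (Fin m) (Fin k) ℝ) :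
    A.rank = Module.finrank ℝ (colSpace A) :=
  rank_eq_range A

lemma range_le_of_cols {m : ℕ} {n : Type*} [Fintype n] [DecidableEq n]
    {M : Matrix (Fin m) n ℝ} {K : Submodule ℝ (EuclideanSpace ℝ (Fin m))}
    (h : ∀ j, (WithLp.toLp 2 (fun i => M i j) : EuclideanSpace ℝ (Fin m)) ∈ K) :
    LinearMap.range (Matrix.toEuclideanLin M) ≤ K := by
  rintro _ ⟨x, rfl⟩
  have : (Matrix.toEuclideanLin M x : EuclideanSpace ℝ (Fin m)) = ∑ j, x j • WithLp.toLp 2 (fun i => M i j) := by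
    ext i
    simp only [WithLp.ofLp_sum, WithLp.ofLp_smul, Finset.sum_apply, Pi.smul_apply, smul_eq_mul]
    show (M *ᵥ x) i = _
    simp [Matrix.mulVec, dotProduct, mul_comm]
  rw [this]
  exact Submodule.sum_mem K fun j _ => Submodule.smul_mem K _ (h j)

lemma col_mem_range {m : ℕ} {n : Type*} [Fintype n] [DecidableEq n]
    (M : Matrix (Fin m) n ℝ) (j : n) :
    (WithLp.toLp 2 (fun i => M i j) : EuclideanSpace ℝ (Fin m)) ∈ LinearMap.range (Matrix.toEuclideanLin M) := by
  refine ⟨WithLp.toLp 2 (Pi.single j 1), ?_⟩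
  show WithLp.toLp 2 (M *ᵥ Pi.single j 1) = _
  rw [Matrix.mulVec_single_one]
  rfl

lemma sumsq_eq_normsq {m : ℕ} (v : EuclideanSpace ℝ (Fin m)) :
    ∑ i, v i ^ 2 = ‖v‖ ^ 2 := by
  rw [EuclideanSpace.norm_eq, Real.sq_sqrt (by positivity)]
  simp [Real.norm_eq_abs, sq_abs]

-- matrix-level Pythagoras
lemma sumsq_decomp {m k l : ℕ} (A₁ : Matrix (Fin m) (Fin k) ℝ) (M : Matrix (Fin m) (Fin l) ℝ) :
    ∑ i, ∑ j, M i j ^ 2 =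
      (∑ i, ∑ j, (projCols A₁ M) i j ^ 2) + ∑ i, ∑ j, (projOrthCols A₁ M) i j ^ 2 := by
  have main : ∀ j : Fin l, ∑ i, M i j ^ 2 =
      (∑ i, (projCols A₁ M) i j ^ 2) + ∑ i, (projOrthCols A₁ M) i j ^ 2 := by
    intro j
    have h1 : ∑ i, (projCols A₁ M) i j ^ 2
        = ‖(Submodule.orthogonalProjectionOnto (colSpace A₁) (WithLp.toLp 2 fun i' => M i' j) : EuclideanSpace ℝ (Fin m))‖ ^ 2 :=
      sumsq_eq_normsq _
    have h2 : ∑ i, (projOrthCols A₁ M) i j ^ 2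
        = ‖(Submodule.orthogonalProjectionOnto (colSpace A₁)ᗮ (WithLp.toLp 2 fun i' => M i' j) : EuclideanSpace ℝ (Fin m))‖ ^ 2 :=
      sumsq_eq_normsq _
    have h0 : ∑ i, M i j ^ 2 = ‖(WithLp.toLp 2 fun i' => M i' j : EuclideanSpace ℝ (Fin m))‖ ^ 2 :=
      sumsq_eq_normsq (m := m) (WithLp.toLp 2 fun i' => M i' j)
    rw [h0, h1, h2]
    simpa using Submodule.norm_sq_eq_add_norm_sq_projection
      (E := EuclideanSpace ℝ (Fin m)) (WithLp.toLp 2 fun i' => M i' j) (colSpace A₁)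
  rw [Finset.sum_comm]
  rw [show ∑ i, ∑ j, (projCols A₁ M) i j ^ 2 = ∑ j, ∑ i, (projCols A₁ M) i j ^ 2 from
    Finset.sum_comm]
  rw [show ∑ i, ∑ j, (projOrthCols A₁ M) i j ^ 2 = ∑ j, ∑ i, (projOrthCols A₁ M) i j ^ 2 from
    Finset.sum_comm]
  rw [← Finset.sum_add_distrib]
  exact Finset.sum_congr rfl fun j _ => main j

lemma projCols_add_projOrthCols {m k l : ℕ} (A₁ : Matrix (Fin m) (Fin k) ℝ)
    (M : Matrix (Fin m) (Fin l) ℝ) : projCols A₁ M + projOrthCols A₁ M = M := by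
  ext i j
  exact congrArg (fun v : EuclideanSpace ℝ (Fin m) => v i)
    (Submodule.starProjection_add_starProjection_orthogonal (K := colSpace A₁)
    (WithLp.toLp 2 fun i' => M i' j))

lemma projOrthCols_sub {m k l : ℕ} (A₁ : Matrix (Fin m) (Fin k) ℝ)
    (X Y : Matrix (Fin m) (Fin l) ℝ) :
    projOrthCols A₁ (X - Y) = projOrthCols A₁ X - projOrthCols A₁ Y := by
  ext i j
  show (Submodule.orthogonalProjectionOnto (colSpace A₁)ᗮ
      ((WithLp.toLp 2 ((fun i' => X i' j) - fun i' => Y i' j) : EuclideanSpace ℝ (Fin m))) :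
      EuclideanSpace ℝ (Fin m)) i = _
  rw [WithLp.toLp_sub, map_sub]
  rfl

lemma mem_colSpace_iff {m k : ℕ} {A : Matrix (Fin m) (Fin k) ℝ}
    {v : EuclideanSpace ℝ (Fin m)} :
    v ∈ colSpace A ↔ ∃ x : Fin k → ℝ, A *ᵥ x = v := by
  constructor
  · rintro ⟨x, rfl⟩; exact ⟨x, rfl⟩
  · rintro ⟨x, hx⟩; exact ⟨WithLp.toLp 2 x, by show WithLp.toLp 2 (A *ᵥ x) = v; rw [hx]⟩

lemma colSpace_le_of_cols {m a : ℕ} {M : Matrix (Fin m) (Fin a) ℝ}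
    {K : Submodule ℝ (EuclideanSpace ℝ (Fin m))}
    (h : ∀ j, (WithLp.toLp 2 (fun i => M i j) : EuclideanSpace ℝ (Fin m)) ∈ K) : colSpace M ≤ K :=
  range_le_of_cols h

lemma col_mem_colSpace {m a : ℕ} (M : Matrix (Fin m) (Fin a) ℝ) (j : Fin a) :
    (WithLp.toLp 2 (fun i => M i j) : EuclideanSpace ℝ (Fin m)) ∈ colSpace M :=
  col_mem_range M j

lemma sum_range_congr_zero (g : ℕ → ℝ) (m l : ℕ) (hg : ∀ n, ¬(n < m ∧ n < l) → g n = 0) :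
    ∑ n ∈ Finset.range m, g n = ∑ n ∈ Finset.range l, g n := by
  have h1 : ∑ n ∈ Finset.range (min m l), g n = ∑ n ∈ Finset.range m, g n :=
    Finset.sum_subset (Finset.range_subset_range.2 (min_le_left m l))
      (fun x hx hnx => hg x (by simp only [Finset.mem_range] at hx hnx; omega))
  have h2 : ∑ n ∈ Finset.range (min m l), g n = ∑ n ∈ Finset.range l, g n :=
    Finset.sum_subset (Finset.range_subset_range.2 (min_le_right m l))
      (fun x hx hnx => hg x (by simp only [Finset.mem_range] at hx hnx; omega))
  rw [← h1, h2]

lemma sum_ind_lt (l t : ℕ) (h : t ≤ l) :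
    ∑ j : Fin l, (if (j : ℕ) < t then (1 : ℝ) else 0) = t := by
  rw [Fin.sum_univ_eq_sum_range (fun n => if n < t then (1 : ℝ) else 0) l, ← Finset.sum_filter]
  have : Finset.filter (fun n => n < t) (Finset.range l) = Finset.range t := by
    ext n; simp only [Finset.mem_filter, Finset.mem_range]; omega
  rw [this, Finset.sum_const, Finset.card_range, nsmul_eq_mul, mul_one]

lemma sum_ind_le (l s : ℕ) :
    ∑ a : Fin l, (if s ≤ (a : ℕ) then (1 : ℝ) else 0) = ((l - s : ℕ) : ℝ) := by
  rw [Fin.sum_univ_eq_sum_range (fun n => if s ≤ n then (1 : ℝ) else 0) l, ← Finset.sum_filter]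
  have : Finset.filter (fun n => s ≤ n) (Finset.range l) = Finset.Ico s l := by
    ext n; simp only [Finset.mem_filter, Finset.mem_range, Finset.mem_Ico]; omega
  rw [this, Finset.sum_const, Nat.card_Ico, nsmul_eq_mul, mul_one]

lemma weighted {l : ℕ} (s : ℕ) (hs : s < l) (v c : Fin l → ℝ)
    (hv0 : ∀ a, 0 ≤ v a) (hvm : ∀ a a' : Fin l, (a : ℕ) ≤ (a' : ℕ) → v a' ≤ v a)
    (hc0 : ∀ a, 0 ≤ c a) (hc1 : ∀ a, c a ≤ 1)
    (hcs : ∑ a : Fin l, c a = ((l - s : ℕ) : ℝ)) :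
    ∑ a : Fin l, (if s ≤ (a : ℕ) then v a else 0) ≤ ∑ a : Fin l, c a * v a := by
  set vs := v ⟨s, hs⟩ with hvs
  have key : ∀ a : Fin l, vs * (c a - (if s ≤ (a : ℕ) then 1 else 0)) ≤
      c a * v a - (if s ≤ (a : ℕ) then v a else 0) := by
    intro a
    by_cases h : s ≤ (a : ℕ)
    · simp only [if_pos h]
      have h1 : v a ≤ vs := hvm ⟨s, hs⟩ a h
      nlinarith [hc1 a, hv0 a]
    · simp only [if_neg h]
      have h1 : vs ≤ v a := hvm a ⟨s, hs⟩ (by simp only [Fin.val_mk]; omega)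
      nlinarith [hc0 a, hv0 ⟨s, hs⟩]
  have hsum := Finset.sum_le_sum (fun a (_ : a ∈ Finset.univ) => key a)
  have h2 : ∑ a : Fin l, vs * (c a - (if s ≤ (a : ℕ) then 1 else 0)) = 0 := by
    rw [← Finset.mul_sum, Finset.sum_sub_distrib, hcs, sum_ind_le, sub_self, mul_zero]
  have h3 : ∑ a : Fin l, (c a * v a - (if s ≤ (a : ℕ) then v a else 0)) =
      ∑ a : Fin l, c a * v a - ∑ a : Fin l, (if s ≤ (a : ℕ) then v a else 0) :=
    Finset.sum_sub_distrib _ _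
  rw [h2, h3] at hsum
  linarith

lemma rank_truncate_le {m l : ℕ} (s : ℕ) (D' : Matrix (Fin m) (Fin l) ℝ)
    (h : ∀ (i : Fin m) (j : Fin l), ¬((i : ℕ) < s) → D' i j = 0) : D'.rank ≤ s := by
  classical
  set F : Matrix (Fin m) (Fin m) ℝ :=
    Matrix.diagonal (fun i : Fin m => if (i : ℕ) < s then (1 : ℝ) else 0) with hFdef
  have hF : F * D' = D' := by
    ext i j
    rw [Matrix.diagonal_mul]
    by_cases hi : (i : ℕ) < s
    · simp [hi]
    · simp [hi, h i j hi]
  have h1 : D'.rank ≤ F.rank := by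
    conv_lhs => rw [← hF]
    exact Matrix.rank_mul_le_left F D'
  refine h1.trans ?_
  rw [hFdef, Matrix.rank_diagonal]
  have hinj : Function.Injective
      (fun x : {i : Fin m // (if (i : ℕ) < s then (1:ℝ) else 0) ≠ 0} =>
        (⟨(x.1 : ℕ), by
          rcases x with ⟨i, hi⟩
          by_contra hh
          simp only [if_neg hh] at hi
          exact hi rfl⟩ : Fin s)) := by
    rintro ⟨a, ha⟩ ⟨b, hb⟩ hab
    simp only [Fin.mk.injEq] at hab
    exact Subtype.ext (Fin.ext hab)
  simpa using Fintype.card_le_of_injective _ hinj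

lemma rank_fromColumns_le {m a b : ℕ} (A : Matrix (Fin m) (Fin a) ℝ)
    (B : Matrix (Fin m) (Fin b) ℝ) :
    (Matrix.fromCols A B).rank ≤ A.rank + B.rank := by
  rw [Matrix.rank, Matrix.rank, Matrix.rank]
  have hle : LinearMap.range (Matrix.fromCols A B).mulVecLin ≤
      LinearMap.range A.mulVecLin ⊔ LinearMap.range B.mulVecLin := by
    rintro _ ⟨x, rfl⟩
    have hx : x = Sum.elim (fun i => x (Sum.inl i)) (fun j => x (Sum.inr j)) := by
      funext t; cases t <;> rfl
    rw [Matrix.mulVecLin_apply, hx, Matrix.fromCols_mulVec_sumElim]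
    exact Submodule.add_mem_sup ⟨_, rfl⟩ ⟨_, rfl⟩
  refine le_trans (Submodule.finrank_mono hle) ?_
  have h2 := Submodule.finrank_sup_add_finrank_inf_eq
    (LinearMap.range A.mulVecLin) (LinearMap.range B.mulVecLin)
  omega

lemma eckart_young {m l : ℕ} (s : ℕ) (D B : Matrix (Fin m) (Fin l) ℝ)
    (hDdiag : ∀ (i : Fin m) (j : Fin l), (i : ℕ) ≠ (j : ℕ) → D i j = 0)
    (hDnonneg : ∀ (i : Fin m) (j : Fin l), 0 ≤ D i j)
    (hDmono : ∀ (i i' : Fin m) (j j' : Fin l),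
      (i : ℕ) = (j : ℕ) → (i' : ℕ) = (j' : ℕ) → (i : ℕ) ≤ (i' : ℕ) → D i' j' ≤ D i j)
    (hB : B.rank ≤ s) :
    ∑ i : Fin m, ∑ j : Fin l, (if (i : ℕ) < s then 0 else D i j) ^ 2 ≤
      ∑ i : Fin m, ∑ j : Fin l, (D - B) i j ^ 2 := by
  classical
  set dd : ℕ → ℝ := fun a => if h : a < m ∧ a < l then D ⟨a, h.1⟩ ⟨a, h.2⟩ else 0 with hdd
  have hdd0 : ∀ a, ¬(a < m ∧ a < l) → dd a = 0 := fun a h => dif_neg h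
  have hddnn : ∀ a, 0 ≤ dd a := by
    intro a; rw [hdd]; dsimp only; split
    · exact hDnonneg _ _
    · exact le_refl 0
  have hD' : ∀ (i : Fin m) (j : Fin l), D i j = if (i : ℕ) = (j : ℕ) then dd i else 0 := by
    intro i j
    by_cases h : (i : ℕ) = (j : ℕ)
    · rw [if_pos h, hdd]; dsimp only
      have hc : (i : ℕ) < m ∧ (i : ℕ) < l := ⟨i.2, h ▸ j.2⟩
      rw [dif_pos hc]
      have hii : (⟨(i : ℕ), hc.1⟩ : Fin m) = i := Fin.ext rfl
      have hjj : (⟨(i : ℕ), hc.2⟩ : Fin l) = j := Fin.ext h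
      rw [hii, hjj]
    · rw [if_neg h]; exact hDdiag i j h
  have hddm : ∀ a a' : Fin l, (a : ℕ) ≤ (a' : ℕ) → dd a' ≤ dd a := by
    intro a a' haa
    by_cases h : (a' : ℕ) < m ∧ (a' : ℕ) < l
    · have ha : (a : ℕ) < m ∧ (a : ℕ) < l := ⟨lt_of_le_of_lt haa h.1, a.2⟩
      rw [hdd]; dsimp only; rw [dif_pos h, dif_pos ha]
      exact hDmono ⟨a, ha.1⟩ ⟨a', h.1⟩ ⟨a, ha.2⟩ ⟨a', h.2⟩ rfl rfl haa
    · rw [hdd0 _ h]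
      exact hddnn a
  have hrow : ∀ i : Fin m, ∑ j, D i j ^ 2 = dd i ^ 2 := by
    intro i
    by_cases h : (i : ℕ) < l
    · rw [Finset.sum_eq_single (⟨(i : ℕ), h⟩ : Fin l)]
      · rw [hD']; simp
      · intro b _ hb
        have hne : (i : ℕ) ≠ (b : ℕ) := fun hh => hb (Fin.ext hh.symm)
        rw [hDdiag i b hne]; norm_num
      · intro h'; exact absurd (Finset.mem_univ _) h'
    · have h0 : dd i = 0 := hdd0 _ (fun hc => h hc.2)
      rw [h0]
      rw [Finset.sum_eq_zero]
      · norm_num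
      · intro j _
        have : (i : ℕ) ≠ (j : ℕ) := by have := j.2; omega
        rw [hDdiag i j this]; norm_num
  have hLHS : ∑ i : Fin m, ∑ j : Fin l, (if (i : ℕ) < s then 0 else D i j) ^ 2
      = ∑ a : Fin l, (if s ≤ (a : ℕ) then dd a ^ 2 else 0) := by
    have h1 : ∀ i : Fin m, ∑ j, (if (i : ℕ) < s then 0 else D i j) ^ 2
        = (if s ≤ (i : ℕ) then dd (i : ℕ) ^ 2 else 0) := by
      intro i
      by_cases h : (i : ℕ) < s
      · simp [if_pos h, if_neg (not_le.mpr h)]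
      · simp only [if_neg h, if_pos (not_lt.mp h)]
        exact hrow i
    rw [Finset.sum_congr rfl (fun i _ => h1 i),
      Fin.sum_univ_eq_sum_range (fun n => if s ≤ n then dd n ^ 2 else 0) m,
      show (∑ a : Fin l, (if s ≤ (a : ℕ) then dd a ^ 2 else 0))
          = ∑ n ∈ Finset.range l, (if s ≤ n then dd n ^ 2 else 0) from
        Fin.sum_univ_eq_sum_range (fun n => if s ≤ n then dd n ^ 2 else 0) l]
    exact sum_range_congr_zero _ m l (fun n hn => by rw [hdd0 n hn]; simp)
  rw [hLHS]
  by_cases hsl : l ≤ s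
  · have hz : ∑ a : Fin l, (if s ≤ (a : ℕ) then dd a ^ 2 else 0) = 0 := by
      apply Finset.sum_eq_zero
      intro a _
      rw [if_neg (by have := a.2; omega)]
    rw [hz]
    positivity
  push_neg at hsl
  set t := l - s with ht
  -- the kernel of B has dimension at least t
  set K := LinearMap.ker (Matrix.toEuclideanLin B) with hKdef
  have hK : t ≤ Module.finrank ℝ K := by
    rw [hKdef]
    have h := LinearMap.finrank_range_add_finrank_ker (Matrix.toEuclideanLin B)
    rw [finrank_euclideanSpace_fin] at h
    have h2 : Module.finrank ℝ (LinearMap.range (Matrix.toEuclideanLin B)) = B.rank :=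
      (rank_eq_colSpace B).symm
    omega
  set dK := Module.finrank ℝ K with hdK
  set bK := stdOrthonormalBasis ℝ K with hbK
  set v : Fin l → EuclideanSpace ℝ (Fin l) := fun j =>
    if h : (j : ℕ) < dK then (bK ⟨(j : ℕ), h⟩ : EuclideanSpace ℝ (Fin l)) else 0 with hv
  have hvon : Orthonormal ℝ (Set.restrict {j : Fin l | (j : ℕ) < dK} v) := by
    constructor
    · rintro ⟨j, hj⟩
      have hj2 : (j : ℕ) < dK := hj
      simp only [Set.restrict_apply, hv]
      dsimp only [Set.restrict, Set.domRestrict]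
      rw [dif_pos hj2]
      exact bK.orthonormal.1 _
    · rintro ⟨j, hj⟩ ⟨j', hj'⟩ hne
      have hj2 : (j : ℕ) < dK := hj
      have hj2' : (j' : ℕ) < dK := hj'
      simp only [Set.restrict_apply, hv]
      dsimp only [Set.restrict, Set.domRestrict]
      rw [dif_pos hj2, dif_pos hj2']
      refine bK.orthonormal.2 ?_
      intro hh
      have hval : (j : ℕ) = (j' : ℕ) := by simpa using congrArg Fin.val hh
      exact hne (Subtype.ext (Fin.ext hval))
  obtain ⟨b, hb⟩ := hvon.exists_orthonormalBasis_extension_of_card_eq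
    (by rw [finrank_euclideanSpace_fin, Fintype.card_fin])
  set U : Matrix (Fin l) (Fin l) ℝ := Matrix.of (fun a j => b j a) with hU
  have hinner : ∀ j j' : Fin l, (inner ℝ (b j) (b j') : ℝ) = ∑ a, b j a * b j' a := by
    intro j j'
    simp [PiLp.inner_apply, RCLike.inner_apply, conj_trivial, mul_comm]
  have hUtU : Uᵀ * U = 1 := by
    ext j j'
    have hon := orthonormal_iff_ite.mp b.orthonormal j j'
    rw [hinner] at hon
    rw [Matrix.mul_apply]
    simp only [Matrix.transpose_apply, hU, Matrix.of_apply]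
    rw [hon]
    simp [Matrix.one_apply]
  have hUUt : U * Uᵀ = 1 := mul_eq_one_comm.mp hUtU
  have hker : ∀ j : Fin l, (j : ℕ) < t → B *ᵥ (fun a => U a j) = 0 := by
    intro j hj
    have hjd : (j : ℕ) < dK := lt_of_lt_of_le hj hK
    have hbj : b j = v j := hb j hjd
    have hvj : v j = (bK ⟨(j : ℕ), hjd⟩ : EuclideanSpace ℝ (Fin l)) := by
      rw [hv]; exact dif_pos hjd
    have hmem : v j ∈ K := by rw [hvj]; exact SetLike.coe_mem _
    have : (fun a => U a j) = b j := rfl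
    rw [this, hbj]
    exact congrArg (WithLp.equiv 2 (Fin m → ℝ)) (LinearMap.mem_ker.mp hmem)
  -- row sums of squares of U are 1
  have hUUt_diag : ∀ a : Fin l, ∑ j, (b j a) ^ 2 = 1 := by
    intro a
    have h3 : (U * Uᵀ) a a = 1 := by rw [hUUt]; simp [Matrix.one_apply]
    rw [Matrix.mul_apply] at h3
    simpa [hU, sq] using h3
  have hUtU_diag : ∀ j : Fin l, ∑ a, (b j a) ^ 2 = 1 := by
    intro j
    have h3 : (Uᵀ * U) j j = 1 := by rw [hUtU]; simp [Matrix.one_apply]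
    rw [Matrix.mul_apply] at h3
    simpa [hU, sq] using h3
  set c : Fin l → ℝ := fun a => ∑ j : Fin l, (if (j : ℕ) < t then (b j a) ^ 2 else 0) with hc
  have hc0 : ∀ a, 0 ≤ c a := by
    intro a; rw [hc]; dsimp only
    apply Finset.sum_nonneg
    intro j _; split
    · positivity
    · exact le_refl 0
  have hc1 : ∀ a, c a ≤ 1 := by
    intro a; rw [hc]; dsimp only
    calc ∑ j : Fin l, (if (j : ℕ) < t then (b j a) ^ 2 else 0)
        ≤ ∑ j : Fin l, (b j a) ^ 2 := by
          apply Finset.sum_le_sum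
          intro j _; split
          · exact le_refl _
          · positivity
      _ = 1 := hUUt_diag a
  have hcs : ∑ a : Fin l, c a = ((l - s : ℕ) : ℝ) := by
    rw [hc]; dsimp only
    rw [Finset.sum_comm]
    have heach : ∀ j : Fin l, ∑ a, (if (j : ℕ) < t then (b j a) ^ 2 else 0)
        = if (j : ℕ) < t then (1 : ℝ) else 0 := by
      intro j
      by_cases h : (j : ℕ) < t
      · simp only [if_pos h]; exact hUtU_diag j
      · simp [h]
    rw [Finset.sum_congr rfl (fun j _ => heach j), sum_ind_lt l t (by omega)]
  -- hsum : sum of squares of D *ᵥ u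
  have hmv : ∀ (u : Fin l → ℝ) (i : Fin m),
      (D *ᵥ u) i = dd i * (if h : (i : ℕ) < l then u ⟨(i : ℕ), h⟩ else 0) := by
    intro u i
    by_cases h : (i : ℕ) < l
    · rw [dif_pos h]
      show (∑ a, D i a * u a) = _
      rw [Finset.sum_eq_single (⟨(i : ℕ), h⟩ : Fin l)]
      · rw [hD']; simp
      · intro b _ hb
        have hne : (i : ℕ) ≠ (b : ℕ) := fun hh => hb (Fin.ext hh.symm)
        rw [hDdiag i b hne, zero_mul]
      · intro h'; exact absurd (Finset.mem_univ _) h'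
    · rw [dif_neg h, mul_zero]
      show (∑ a, D i a * u a) = 0
      apply Finset.sum_eq_zero
      intro a _
      have : (i : ℕ) ≠ (a : ℕ) := by have := a.2; omega
      rw [hDdiag i a this, zero_mul]
  have hsum : ∀ u : Fin l → ℝ, ∑ i, ((D *ᵥ u) i) ^ 2 = ∑ a : Fin l, dd a ^ 2 * (u a) ^ 2 := by
    intro u
    set g : ℕ → ℝ := fun n => dd n ^ 2 * (if h : n < l then u ⟨n, h⟩ else 0) ^ 2 with hg
    have e1 : ∑ i : Fin m, ((D *ᵥ u) i) ^ 2 = ∑ i : Fin m, g (i : ℕ) := by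
      apply Finset.sum_congr rfl
      intro i _
      rw [hmv u i, mul_pow]
    have e2 : ∑ a : Fin l, dd a ^ 2 * (u a) ^ 2 = ∑ a : Fin l, g (a : ℕ) := by
      apply Finset.sum_congr rfl
      intro a _
      rw [hg]; dsimp only
      rw [dif_pos a.2]
    rw [e1, e2, Fin.sum_univ_eq_sum_range g m, Fin.sum_univ_eq_sum_range g l]
    apply sum_range_congr_zero
    intro n hn
    rw [hg]; dsimp only
    rw [hdd0 n hn]
    ring
  -- main chain
  have step1 : ∑ i : Fin m, ∑ j : Fin l, (D - B) i j ^ 2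
      = ∑ j : Fin l, ∑ i : Fin m, ((D - B) * U) i j ^ 2 := by
    rw [← sumsq_mul_right hUUt (D - B), Finset.sum_comm]
  have step3 : ∀ j : Fin l, (j : ℕ) < t →
      ∑ i, ((D - B) * U) i j ^ 2 = ∑ a : Fin l, dd a ^ 2 * (b j a) ^ 2 := by
    intro j hj
    have hcol : ∀ i, ((D - B) * U) i j = (D *ᵥ (fun a => U a j)) i := by
      intro i
      have hBu := congrFun (hker j hj) i
      show (∑ a, (D - B) i a * U a j) = ∑ a, D i a * U a j
      have hBu' : (∑ a, B i a * U a j) = 0 := hBu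
      simp only [Matrix.sub_apply, sub_mul]
      rw [Finset.sum_sub_distrib, hBu', sub_zero]
    rw [Finset.sum_congr rfl (fun i _ => by rw [hcol i])]
    exact hsum (fun a => U a j)
  have step4 : ∑ j : Fin l, (if (j : ℕ) < t then ∑ a : Fin l, dd a ^ 2 * (b j a) ^ 2 else 0)
      ≤ ∑ j : Fin l, ∑ i : Fin m, ((D - B) * U) i j ^ 2 := by
    apply Finset.sum_le_sum
    intro j _
    by_cases h : (j : ℕ) < t
    · rw [if_pos h, ← step3 j h]
    · rw [if_neg h]
      positivity
  have step5 : ∑ j : Fin l, (if (j : ℕ) < t then ∑ a : Fin l, dd a ^ 2 * (b j a) ^ 2 else 0)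
      = ∑ a : Fin l, c a * dd a ^ 2 := by
    have e1 : ∀ j : Fin l, (if (j : ℕ) < t then ∑ a : Fin l, dd a ^ 2 * (b j a) ^ 2 else 0)
        = ∑ a : Fin l, (if (j : ℕ) < t then dd a ^ 2 * (b j a) ^ 2 else 0) := by
      intro j
      by_cases h : (j : ℕ) < t <;> simp [h]
    rw [Finset.sum_congr rfl (fun j _ => e1 j), Finset.sum_comm]
    apply Finset.sum_congr rfl
    intro a _
    rw [hc]; dsimp only
    rw [Finset.sum_mul]
    apply Finset.sum_congr rfl
    intro j _
    by_cases h : (j : ℕ) < t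
    · rw [if_pos h, if_pos h]; ring
    · rw [if_neg h, if_neg h, zero_mul]
  have step6 := weighted s hsl (fun a => dd (a : ℕ) ^ 2) c (fun a => by positivity)
    (fun a a' haa => by
      exact pow_le_pow_left₀ (hddnn _) (hddm a a' haa) 2)
    hc0 hc1 hcs
  calc ∑ a : Fin l, (if s ≤ (a : ℕ) then dd a ^ 2 else 0)
      ≤ ∑ a : Fin l, c a * dd a ^ 2 := step6
    _ = ∑ j : Fin l, (if (j : ℕ) < t then ∑ a : Fin l, dd a ^ 2 * (b j a) ^ 2 else 0) := step5.symm
    _ ≤ ∑ j : Fin l, ∑ i : Fin m, ((D - B) * U) i j ^ 2 := step4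
    _ = ∑ i : Fin m, ∑ j : Fin l, (D - B) i j ^ 2 := step1.symm

lemma orth_facts {m : ℕ} {P : Matrix (Fin m) (Fin m) ℝ}
    (hP : P ∈ Matrix.orthogonalGroup (Fin m) ℝ) : Pᵀ * P = 1 ∧ P * Pᵀ = 1 := by
  have h1 := hP.1
  have h2 := hP.2
  have hst : star P = Pᵀ := by ext i j; rfl
  rw [hst] at h1 h2
  exact ⟨h1, h2⟩

lemma rank_projOrth_le {m k l r : ℕ} (A₁ : Matrix (Fin m) (Fin k) ℝ)
    (B₂ : Matrix (Fin m) (Fin l) ℝ) (hA₁ : A₁.rank = k)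
    (hr : (Matrix.fromCols A₁ B₂).rank ≤ r) :
    (projOrthCols A₁ B₂).rank ≤ r - k := by
  set S := colSpace A₁ with hSdef
  set W := colSpace (projOrthCols A₁ B₂) with hWdef
  set T := LinearMap.range (Matrix.toEuclideanLin (Matrix.fromCols A₁ B₂)) with hTdef
  have hWperp : W ≤ Sᗮ := by
    rw [hWdef]
    apply colSpace_le_of_cols
    intro j
    have hm : ((Submodule.orthogonalProjectionOnto (colSpace A₁)ᗮ (WithLp.toLp 2 fun i' => B₂ i' j) :
        EuclideanSpace ℝ (Fin m))) ∈ (colSpace A₁)ᗮ := SetLike.coe_mem _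
    exact hm
  have hST : S ≤ T := by
    rw [hSdef]
    apply colSpace_le_of_cols
    intro j
    exact col_mem_range (Matrix.fromCols A₁ B₂) (Sum.inl j)
  have hBT : ∀ j, (WithLp.toLp 2 (fun i => B₂ i j) : EuclideanSpace ℝ (Fin m)) ∈ T := fun j =>
    col_mem_range (Matrix.fromCols A₁ B₂) (Sum.inr j)
  have hWT : W ≤ T := by
    rw [hWdef]
    apply colSpace_le_of_cols
    intro j
    have hdecomp := projCols_add_projOrthCols A₁ B₂
    have hcol : (WithLp.toLp 2 (fun i => projOrthCols A₁ B₂ i j) : EuclideanSpace ℝ (Fin m))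
        = (WithLp.toLp 2 (fun i => B₂ i j) : EuclideanSpace ℝ (Fin m)) - WithLp.toLp 2 (fun i => projCols A₁ B₂ i j) := by
      ext i
      have h2 := congrFun (congrFun hdecomp i) j
      show projOrthCols A₁ B₂ i j = B₂ i j - projCols A₁ B₂ i j
      have h3 : projCols A₁ B₂ i j + projOrthCols A₁ B₂ i j = B₂ i j := h2
      linarith
    rw [hcol]
    refine Submodule.sub_mem _ (hBT j) (hST ?_)
    have hm : ((Submodule.orthogonalProjectionOnto (colSpace A₁) (WithLp.toLp 2 fun i' => B₂ i' j) :
        EuclideanSpace ℝ (Fin m))) ∈ colSpace A₁ := SetLike.coe_mem _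
    exact hm
  have hfin := Submodule.finrank_sup_add_finrank_inf_eq S W
  have hinf : S ⊓ W = ⊥ := by
    have h1 : S ⊓ W ≤ S ⊓ Sᗮ := inf_le_inf_left S hWperp
    rw [Submodule.inf_orthogonal_eq_bot] at h1
    exact le_bot_iff.mp h1
  rw [hinf, finrank_bot, add_zero] at hfin
  have hsup : Module.finrank ℝ (S ⊔ W : Submodule ℝ (EuclideanSpace ℝ (Fin m)))
      ≤ (Matrix.fromCols A₁ B₂).rank := by
    rw [rank_eq_range]
    exact Submodule.finrank_mono (sup_le hST hWT)
  have hSk : Module.finrank ℝ S = k := by rw [hSdef, ← rank_eq_colSpace, hA₁]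
  have hW : (projOrthCols A₁ B₂).rank = Module.finrank ℝ W := rank_eq_colSpace _
  omega

/-- The optimal value of the constrained low-rank approximation problem
`min {‖A₂ − B₂‖_F² : rank (A₁ B₂) ≤ r}` equals the squared Frobenius error
`‖P⊥_{A₁}(A₂) − H_{r−k}(P⊥_{A₁}(A₂))‖_F²` of the best rank-`(r−k)` approximation of the
projected residual; here `H_{r−k}` is computed from an SVD `P⊥_{A₁}(A₂) = P D Qᵀ`.
Moreover the optimal value is attained (it is the least element of the value set). -/
theorem ghs_optimal_value
    (m k l r : ℕ) (hkr : k ≤ r)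
    (A₁ : Matrix (Fin m) (Fin k) ℝ) (A₂ : Matrix (Fin m) (Fin l) ℝ)
    (hA₁ : A₁.rank = k)
    (P : Matrix (Fin m) (Fin m) ℝ) (Q : Matrix (Fin l) (Fin l) ℝ)
    (D : Matrix (Fin m) (Fin l) ℝ)
    (hP : P ∈ Matrix.orthogonalGroup (Fin m) ℝ)
    (hQ : Q ∈ Matrix.orthogonalGroup (Fin l) ℝ)
    (hDdiag : ∀ (i : Fin m) (j : Fin l), (i : ℕ) ≠ (j : ℕ) → D i j = 0)
    (hDnonneg : ∀ (i : Fin m) (j : Fin l), 0 ≤ D i j)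
    (hDmono : ∀ (i i' : Fin m) (j j' : Fin l),
      (i : ℕ) = (j : ℕ) → (i' : ℕ) = (j' : ℕ) → (i : ℕ) ≤ (i' : ℕ) → D i' j' ≤ D i j)
    (hSVD : projOrthCols A₁ A₂ = P * D * Qᵀ) :
    IsLeast
      { x : ℝ | ∃ B₂ : Matrix (Fin m) (Fin l) ℝ,
          (Matrix.fromCols A₁ B₂).rank ≤ r ∧ x = (frobNorm (A₂ - B₂)) ^ 2 }
      ((frobNorm (projOrthCols A₁ A₂ -
        P * (Matrix.of fun (i : Fin m) (j : Fin l) => if (i : ℕ) < r - k then D i j else 0)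
          * Qᵀ)) ^ 2) := by
  classical
  obtain ⟨hP1, hP2⟩ := orth_facts hP
  obtain ⟨hQ1, hQ2⟩ := orth_facts hQ
  set Ds : Matrix (Fin m) (Fin l) ℝ :=
    Matrix.of fun (i : Fin m) (j : Fin l) => if (i : ℕ) < r - k then D i j else 0 with hDs
  set H : Matrix (Fin m) (Fin l) ℝ := P * Ds * Qᵀ with hH
  have hQt1 : Qᵀ * Qᵀᵀ = 1 := by rw [Matrix.transpose_transpose]; exact hQ1
  constructor
  · -- membership : B₂ = projCols A₁ A₂ + H attains the value
    refine ⟨projCols A₁ A₂ + H, ?_, ?_⟩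
    · -- rank bound
      have hXcol : ∀ j : Fin l, ∃ x : Fin k → ℝ,
          A₁ *ᵥ x = fun i => projCols A₁ A₂ i j := by
        intro j
        have hm : (WithLp.toLp 2 (fun i => projCols A₁ A₂ i j) : EuclideanSpace ℝ (Fin m)) ∈ colSpace A₁ := by
          have hm2 : ((Submodule.orthogonalProjectionOnto (colSpace A₁) (WithLp.toLp 2 fun i' => A₂ i' j) :
              EuclideanSpace ℝ (Fin m))) ∈ colSpace A₁ := SetLike.coe_mem _
          exact hm2
        exact mem_colSpace_iff.mp hm
      choose Xf hXf using hXcol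
      set X : Matrix (Fin k) (Fin l) ℝ := Matrix.of fun a j => Xf j a with hXdef
      have hX : A₁ * X = projCols A₁ A₂ := by
        ext i j
        have h := congrFun (hXf j) i
        exact h
      have hfc : Matrix.fromCols A₁ (projCols A₁ A₂ + H) =
          Matrix.fromCols A₁ H * (Matrix.fromBlocks 1 X 0 1 : Matrix (Fin k ⊕ Fin l) (Fin k ⊕ Fin l) ℝ) := by
        rw [Matrix.fromCols_mul_fromBlocks, Matrix.mul_one, Matrix.mul_zero, Matrix.mul_one,
          add_zero, hX]
      rw [hfc]
      have hHrank : H.rank ≤ r - k := by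
        calc H.rank ≤ (P * Ds).rank := Matrix.rank_mul_le_left _ _
          _ ≤ Ds.rank := Matrix.rank_mul_le_right _ _
          _ ≤ r - k := rank_truncate_le (r - k) Ds (fun i j h => by
              show (if (i : ℕ) < r - k then D i j else 0) = 0
              rw [if_neg h])
      calc (Matrix.fromCols A₁ H * (Matrix.fromBlocks 1 X 0 1 : Matrix (Fin k ⊕ Fin l) (Fin k ⊕ Fin l) ℝ)).rank
          ≤ (Matrix.fromCols A₁ H).rank := Matrix.rank_mul_le_left _ _
        _ ≤ A₁.rank + H.rank := rank_fromColumns_le _ _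
        _ ≤ r := by omega
    · -- value equals the claimed optimum
      have hval : A₂ - (projCols A₁ A₂ + H) = projOrthCols A₁ A₂ - H := by
        have hd := projCols_add_projOrthCols A₁ A₂
        conv_lhs => rw [show A₂ - (projCols A₁ A₂ + H)
          = (projCols A₁ A₂ + projOrthCols A₁ A₂) - (projCols A₁ A₂ + H) from by rw [hd]]
        abel
      rw [hval]
  · -- lower bound
    rintro x ⟨B₂, hrank, rfl⟩
    rw [frobNorm_sq, frobNorm_sq]
    set W := projOrthCols A₁ B₂ with hWdef
    have hWrank : W.rank ≤ r - k := rank_projOrth_le A₁ B₂ hA₁ hrank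
    set B' := Pᵀ * W * Q with hB'
    have hB'rank : B'.rank ≤ r - k := by
      calc B'.rank ≤ (Pᵀ * W).rank := Matrix.rank_mul_le_left _ _
        _ ≤ W.rank := Matrix.rank_mul_le_right _ _
        _ ≤ r - k := hWrank
    have hEY := eckart_young (r - k) D B' hDdiag hDnonneg hDmono hB'rank
    have e1 : ∑ i, ∑ j, (projOrthCols A₁ A₂ - H) i j ^ 2
        = ∑ i : Fin m, ∑ j : Fin l, (if (i : ℕ) < r - k then 0 else D i j) ^ 2 := by
      have hfact : projOrthCols A₁ A₂ - H = P * ((D - Ds) * Qᵀ) := by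
        rw [hSVD, hH, Matrix.mul_assoc P D Qᵀ, Matrix.mul_assoc P Ds Qᵀ, ← Matrix.mul_sub,
          ← Matrix.sub_mul]
      rw [hfact, sumsq_mul_left hP1, sumsq_mul_right hQt1]
      refine Finset.sum_congr rfl fun i _ => Finset.sum_congr rfl fun j _ => ?_
      show (D i j - (if (i : ℕ) < r - k then D i j else 0)) ^ 2 = _
      by_cases h : (i : ℕ) < r - k
      · rw [if_pos h, if_pos h, sub_self]
      · rw [if_neg h, if_neg h, sub_zero]
    have e2 : ∑ i, ∑ j, (projOrthCols A₁ A₂ - W) i j ^ 2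
        = ∑ i : Fin m, ∑ j : Fin l, (D - B') i j ^ 2 := by
      have h4 : P * ((Pᵀ * W * Q) * Qᵀ) = W := by
        rw [Matrix.mul_assoc (Pᵀ * W) Q Qᵀ, hQ2, Matrix.mul_one, ← Matrix.mul_assoc,
          hP2, Matrix.one_mul]
      have hfact : projOrthCols A₁ A₂ - W = P * ((D - B') * Qᵀ) := by
        rw [hSVD, hB', Matrix.sub_mul, Matrix.mul_sub, h4, Matrix.mul_assoc P D Qᵀ]
      rw [hfact, sumsq_mul_left hP1, sumsq_mul_right hQt1]
    have e3 : ∑ i, ∑ j, (projOrthCols A₁ (A₂ - B₂)) i j ^ 2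
        ≤ ∑ i : Fin m, ∑ j : Fin l, (A₂ - B₂) i j ^ 2 := by
      rw [sumsq_decomp A₁ (A₂ - B₂)]
      have hpos : 0 ≤ ∑ i, ∑ j, (projCols A₁ (A₂ - B₂)) i j ^ 2 := by positivity
      linarith
    have e4 : projOrthCols A₁ (A₂ - B₂) = projOrthCols A₁ A₂ - W :=
      projOrthCols_sub A₁ A₂ B₂
    rw [e4] at e3
    calc ∑ i, ∑ j, (projOrthCols A₁ A₂ - H) i j ^ 2
        = ∑ i : Fin m, ∑ j : Fin l, (if (i : ℕ) < r - k then 0 else D i j) ^ 2 := e1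
      _ ≤ ∑ i, ∑ j, (D - B') i j ^ 2 := hEY
      _ = ∑ i, ∑ j, (projOrthCols A₁ A₂ - W) i j ^ 2 := e2.symm
      _ ≤ ∑ i, ∑ j, (A₂ - B₂) i j ^ 2 := e3
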